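/- In any equilibrium (S_t), the rent satisfies the uniform upper bound r_t ≤ r̄·G^{γ·t} for all t, where r̄ := m·e1^γ·c(1, G·(1+w))^γ/c_y(1, G·w); consequently limsup_{t→∞} r_t^{1/t} ≤ G^γ. -/

import Mathlib

open Real Filter Set Topology

/-- Assumption C: `c` is a positive, homogeneous of degree 1, twice continuously
differentiable function on `(0,∞)²` with partial derivatives `cy, cz > 0`, second partial
derivatives `cyy, czz < 0`, and Inada conditions. -/
structure AssumptionC (c cy cz cyy cyz czz : ℝ → ℝ → ℝ) : Prop where
  c_pos : ∀ ⦃y z : ℝ⦄, 0 < y → 0 < z → 0 < c y z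
  homog : ∀ ⦃l y z : ℝ⦄, 0 < l → 0 < y → 0 < z → c (l * y) (l * z) = l * c y z
  hderiv_y : ∀ ⦃y z : ℝ⦄, 0 < y → 0 < z → HasDerivAt (fun u => c u z) (cy y z) y
  hderiv_z : ∀ ⦃y z : ℝ⦄, 0 < y → 0 < z → HasDerivAt (fun v => c y v) (cz y z) z
  hderiv_yy : ∀ ⦃y z : ℝ⦄, 0 < y → 0 < z → HasDerivAt (fun u => cy u z) (cyy y z) y
  hderiv_yz : ∀ ⦃y z : ℝ⦄, 0 < y → 0 < z → HasDerivAt (fun v => cy y v) (cyz y z) z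
  hderiv_zy : ∀ ⦃y z : ℝ⦄, 0 < y → 0 < z → HasDerivAt (fun u => cz u z) (cyz y z) y
  hderiv_zz : ∀ ⦃y z : ℝ⦄, 0 < y → 0 < z → HasDerivAt (fun v => cz y v) (czz y z) z
  cy_pos : ∀ ⦃y z : ℝ⦄, 0 < y → 0 < z → 0 < cy y z
  cz_pos : ∀ ⦃y z : ℝ⦄, 0 < y → 0 < z → 0 < cz y z
  cyy_neg : ∀ ⦃y z : ℝ⦄, 0 < y → 0 < z → cyy y z < 0
  czz_neg : ∀ ⦃y z : ℝ⦄, 0 < y → 0 < z → czz y z < 0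
  cont2 : ContinuousOn (fun p : ℝ × ℝ => (cyy p.1 p.2, cyz p.1 p.2, czz p.1 p.2))
    {p : ℝ × ℝ | 0 < p.1 ∧ 0 < p.2}
  inada_y : ∀ ⦃z : ℝ⦄, 0 < z → Tendsto (fun y => cy y z) (𝓝[>] (0:ℝ)) atTop
  inada_z : ∀ ⦃y : ℝ⦄, 0 < y → Tendsto (fun z => cz y z) (𝓝[>] (0:ℝ)) atTop

/-- An equilibrium: `0 < S t < e1·G^t` and the difference equation
`S_{t+1}·c_z = S_t·c_y − m·c^γ` at `(y_t, z_t) = (e1·G^t − S_t, e2·G^{t+1} + S_{t+1})`. -/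
def IsEquilibrium (c cy cz : ℝ → ℝ → ℝ) (e1 e2 G γ m : ℝ) (S : ℕ → ℝ) : Prop :=
  ∀ t : ℕ, 0 < S t ∧ S t < e1 * G ^ t ∧
    S (t + 1) * cz (e1 * G ^ t - S t) (e2 * G ^ (t + 1) + S (t + 1)) =
      S t * cy (e1 * G ^ t - S t) (e2 * G ^ (t + 1) + S (t + 1)) -
        m * c (e1 * G ^ t - S t) (e2 * G ^ (t + 1) + S (t + 1)) ^ γ

/-- The rent `r_t = m·c(y_t,z_t)^γ / c_y(y_t,z_t)`. -/
noncomputable def rent (c cy : ℝ → ℝ → ℝ) (e1 e2 G γ m : ℝ) (S : ℕ → ℝ) (t : ℕ) : ℝ :=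
  m * c (e1 * G ^ t - S t) (e2 * G ^ (t + 1) + S (t + 1)) ^ γ /
    cy (e1 * G ^ t - S t) (e2 * G ^ (t + 1) + S (t + 1))

/-- The housing price `P_t = S_t − r_t`. -/
noncomputable def price (c cy : ℝ → ℝ → ℝ) (e1 e2 G γ m : ℝ) (S : ℕ → ℝ) (t : ℕ) : ℝ :=
  S t - rent c cy e1 e2 G γ m S t

/-- The gross interest rate `R_t = S_{t+1}/P_t`. -/
noncomputable def irate (c cy : ℝ → ℝ → ℝ) (e1 e2 G γ m : ℝ) (S : ℕ → ℝ) (t : ℕ) : ℝ :=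
  S (t + 1) / price c cy e1 e2 G γ m S t

section Aux

variable {c cy cz cyy cyz czz : ℝ → ℝ → ℝ}

lemma auxMonoL (hC : AssumptionC c cy cz cyy cyz czz) {z : ℝ} (hz : 0 < z) :
    StrictMonoOn (fun u => c u z) (Ioi (0:ℝ)) := by
  apply strictMonoOn_of_deriv_pos (convex_Ioi 0)
  · exact fun u hu => ((hC.hderiv_y hu hz).continuousAt).continuousWithinAt
  · intro u hu
    rw [interior_Ioi] at hu
    rw [(hC.hderiv_y hu hz).deriv]
    exact hC.cy_pos hu hz

lemma auxMonoR (hC : AssumptionC c cy cz cyy cyz czz) {y : ℝ} (hy : 0 < y) :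
    StrictMonoOn (fun v => c y v) (Ioi (0:ℝ)) := by
  apply strictMonoOn_of_deriv_pos (convex_Ioi 0)
  · exact fun u hu => ((hC.hderiv_z hy hu).continuousAt).continuousWithinAt
  · intro u hu
    rw [interior_Ioi] at hu
    rw [(hC.hderiv_z hy hu).deriv]
    exact hC.cz_pos hy hu

lemma auxAntiCy (hC : AssumptionC c cy cz cyy cyz czz) :
    StrictAntiOn (fun u => cy u 1) (Ioi (0:ℝ)) := by
  apply strictAntiOn_of_deriv_neg (convex_Ioi 0)
  · exact fun u hu => ((hC.hderiv_yy hu one_pos).continuousAt).continuousWithinAt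
  · intro u hu
    rw [interior_Ioi] at hu
    rw [(hC.hderiv_yy hu one_pos).deriv]
    exact hC.cyy_neg hu one_pos

lemma auxCyHomog (hC : AssumptionC c cy cz cyy cyz czz) {l y z : ℝ}
    (hl : 0 < l) (hy : 0 < y) (hz : 0 < z) : cy (l * y) (l * z) = cy y z := by
  have h1 : HasDerivAt (fun u : ℝ => c (l * u) (l * z)) (cy (l * y) (l * z) * l) y := by
    have := (hC.hderiv_y (show (0:ℝ) < l * y by positivity)
      (show (0:ℝ) < l * z by positivity)).comp y ((hasDerivAt_id y).const_mul l)
    rw [mul_one] at this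
    exact this
  have h2 : HasDerivAt (fun u : ℝ => l * c u z) (l * cy y z) y := (hC.hderiv_y hy hz).const_mul l
  have heq : (fun u : ℝ => l * c u z) =ᶠ[nhds y] (fun u : ℝ => c (l * u) (l * z)) := by
    filter_upwards [Ioi_mem_nhds hy] with u hu
    exact (hC.homog hl hu hz).symm
  have h3 := h1.congr_of_eventuallyEq heq
  have h4 := h3.unique h2
  rw [mul_comm] at h4
  exact mul_left_cancel₀ hl.ne' h4

end Aux

/-- Uniform rent bound: `r_t ≤ r̄·G^{γt}` with
`r̄ = m·e1^γ·c(1, G(1+w))^γ / c_y(1, Gw)`, hence `limsup r_t^{1/t} ≤ G^γ`. -/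


theorem stmt_7 (c cy cz cyy cyz czz : ℝ → ℝ → ℝ)
    (hC : AssumptionC c cy cz cyy cyz czz) (e1 e2 G γ m : ℝ)
    (he1 : 0 < e1) (he2 : 0 < e2) (hG : 1 < G) (hγ : 0 < γ) (hm : 0 < m)
    (S : ℕ → ℝ) (hS : IsEquilibrium c cy cz e1 e2 G γ m S) :
    (∀ t : ℕ, rent c cy e1 e2 G γ m S t ≤
      m * e1 ^ γ * c 1 (G * (1 + e2 / e1)) ^ γ / cy 1 (G * (e2 / e1)) *
        G ^ (γ * (t : ℝ))) ∧
    limsup (fun t : ℕ => rent c cy e1 e2 G γ m S t ^ ((t : ℝ)⁻¹)) atTop ≤ G ^ γ := by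
  have hG0 : (0:ℝ) < G := lt_trans one_pos hG
  have hcb0 : (0:ℝ) < c 1 (G * (1 + e2 / e1)) := hC.c_pos one_pos (by positivity)
  have hcyGw : (0:ℝ) < cy 1 (G * (e2 / e1)) := hC.cy_pos one_pos (by positivity)
  set K : ℝ := m * e1 ^ γ * c 1 (G * (1 + e2 / e1)) ^ γ / cy 1 (G * (e2 / e1)) with hKdef
  have hK : 0 < K := by
    rw [hKdef]
    have : (0:ℝ) < e1 ^ γ := Real.rpow_pos_of_pos he1 γ
    have h2 : (0:ℝ) < c 1 (G * (1 + e2 / e1)) ^ γ := Real.rpow_pos_of_pos hcb0 γ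
    positivity
  have key : ∀ t : ℕ, rent c cy e1 e2 G γ m S t ≤ K * G ^ (γ * (t : ℝ)) := by
    intro t
    obtain ⟨hS1, hS2, -⟩ := hS t
    obtain ⟨hS1', hS2', -⟩ := hS (t + 1)
    simp only [rent, hKdef]
    set A := e1 * G ^ t with hA
    have hApos : 0 < A := by positivity
    set z := e2 * G ^ (t + 1) + S (t + 1) with hz'
    set y := A - S t with hy'
    have hy : 0 < y := sub_pos.mpr hS2
    have hyA : y < A := by rw [hy']; linarith
    have hzl : e2 * G ^ (t + 1) < z := by rw [hz']; linarith
    have hz : 0 < z := lt_trans (by positivity) hzl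
    have hzh : z < (e1 + e2) * G ^ (t + 1) := by rw [hz']; nlinarith
    have hcyz : 0 < c y z := hC.c_pos hy hz
    have hcypos : 0 < cy y z := hC.cy_pos hy hz
    -- upper bound on c
    have hcb : c y z ≤ A * c 1 (G * (1 + e2 / e1)) := by
      have h1 : c y z < c A z := auxMonoL hC hz (mem_Ioi.mpr hy) (mem_Ioi.mpr hApos) hyA
      have h2 : c A z < c A ((e1 + e2) * G ^ (t + 1)) :=
        auxMonoR hC hApos (mem_Ioi.mpr hz) (mem_Ioi.mpr (by positivity)) hzh
      have harg : (e1 + e2) * G ^ (t + 1) = A * (G * (1 + e2 / e1)) := by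
        rw [hA, pow_succ]
        field_simp
      have h3 : c A ((e1 + e2) * G ^ (t + 1)) = A * c 1 (G * (1 + e2 / e1)) := by
        rw [harg, ← hC.homog hApos one_pos (by positivity : (0:ℝ) < G * (1 + e2 / e1)), mul_one]
      linarith
    -- lower bound on cy
    have hq : y / z < e1 / (G * e2) := by
      rw [div_lt_div_iff₀ hz (by positivity : (0:ℝ) < G * e2)]
      have e : e1 * G ^ t * (G * e2) = e1 * (e2 * G ^ (t + 1)) := by rw [pow_succ]; ring
      nlinarith [mul_lt_mul_of_pos_right hyA (show (0:ℝ) < G * e2 by positivity),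
        mul_lt_mul_of_pos_left hzl he1]
    have hq0 : (0:ℝ) < e1 / (G * e2) := by positivity
    have hqy : (0:ℝ) < y / z := by positivity
    have ea : cy y z = cy (y / z) 1 := by
      have h := auxCyHomog hC (show (0:ℝ) < z⁻¹ by positivity) hy hz
      rw [inv_mul_cancel₀ hz.ne'] at h
      rw [← h, inv_mul_eq_div]
    have eb : cy 1 (G * (e2 / e1)) = cy (e1 / (G * e2)) 1 := by
      have h := auxCyHomog hC (show (0:ℝ) < G * (e2 / e1) by positivity) hq0 one_pos
      rw [mul_one] at h
      rw [← h, show (G * (e2 / e1)) * (e1 / (G * e2)) = 1 by field_simp]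
    have hcyb : cy 1 (G * (e2 / e1)) ≤ cy y z := by
      rw [ea, eb]
      exact (auxAntiCy hC (mem_Ioi.mpr hqy) (mem_Ioi.mpr hq0) hq).le
    -- combine
    have hnum : m * c y z ^ γ ≤ m * (A * c 1 (G * (1 + e2 / e1))) ^ γ :=
      mul_le_mul_of_nonneg_left (Real.rpow_le_rpow hcyz.le hcb hγ.le) hm.le
    have hdiv : m * c y z ^ γ / cy y z ≤
        m * (A * c 1 (G * (1 + e2 / e1))) ^ γ / cy 1 (G * (e2 / e1)) := by
      apply div_le_div₀ (by positivity) hnum hcyGw hcyb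
    refine le_trans hdiv (le_of_eq ?_)
    rw [hA, Real.mul_rpow (by positivity) hcb0.le, Real.mul_rpow he1.le (by positivity),
      ← Real.rpow_natCast G t, ← Real.rpow_mul hG0.le, mul_comm (t:ℝ) γ]
    ring
  refine ⟨key, ?_⟩
  have hrpos : ∀ t : ℕ, 0 ≤ rent c cy e1 e2 G γ m S t := by
    intro t
    obtain ⟨hS1, hS2, -⟩ := hS t
    obtain ⟨hS1', hS2', -⟩ := hS (t + 1)
    have hy : 0 < e1 * G ^ t - S t := sub_pos.mpr hS2
    have hz : 0 < e2 * G ^ (t + 1) + S (t + 1) := add_pos (by positivity) hS1'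
    simp only [rent]
    exact div_nonneg (mul_nonneg hm.le (Real.rpow_nonneg (hC.c_pos hy hz).le _))
      (hC.cy_pos hy hz).le
  have hfle : ∀ᶠ t : ℕ in atTop,
      rent c cy e1 e2 G γ m S t ^ ((t : ℝ)⁻¹) ≤ K ^ ((t : ℝ)⁻¹) * G ^ γ := by
    filter_upwards [eventually_ge_atTop 1] with t ht
    have ht0 : ((t : ℝ)) ≠ 0 := Nat.cast_ne_zero.mpr (by omega)
    have h1 := Real.rpow_le_rpow (hrpos t) (key t)
      (show (0:ℝ) ≤ ((t:ℝ))⁻¹ by positivity)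
    refine le_trans h1 (le_of_eq ?_)
    rw [Real.mul_rpow hK.le (Real.rpow_nonneg hG0.le _), ← Real.rpow_mul hG0.le]
    congr 1
    field_simp
  have htend : Tendsto (fun t : ℕ => K ^ ((t : ℝ)⁻¹) * G ^ γ) atTop (nhds (G ^ γ)) := by
    have h0 : Tendsto (fun t : ℕ => ((t : ℝ))⁻¹) atTop (nhds 0) :=
      tendsto_inv_atTop_zero.comp tendsto_natCast_atTop_atTop
    have h1 : Tendsto (fun t : ℕ => K ^ ((t : ℝ)⁻¹)) atTop (nhds 1) := by
      have := (tendsto_const_nhds : Tendsto (fun _ : ℕ => K) atTop (nhds K)).rpow h0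
        (Or.inl hK.ne')
      simpa using this
    simpa using h1.mul_const (G ^ γ)
  calc limsup (fun t : ℕ => rent c cy e1 e2 G γ m S t ^ ((t : ℝ)⁻¹)) atTop
      ≤ limsup (fun t : ℕ => K ^ ((t : ℝ)⁻¹) * G ^ γ) atTop := by
        refine limsup_le_limsup hfle ?_ ?_
        · apply IsBoundedUnder.isCoboundedUnder_le
          exact isBoundedUnder_of ⟨0, fun t => Real.rpow_nonneg (hrpos t) _⟩
        · exact htend.isBoundedUnder_le
    _ = G ^ γ := htend.limsup_eq
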